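/- Given a finite nonempty set 𝒜 of size n, a function v : 𝒜 → ℝ, a maximizer a* of v over 𝒜, and a parameter γ > 0, the expected suboptimality gap under the Inverse Gap Weighting distribution p is bounded as Σ_{a ∈ 𝒜, a ≠ a*} (v(a*) − v(a)) / (n + γ·(v(a*) − v(a))) ≤ (n − 1)/γ. -/

import Mathlib

/-- The expected suboptimality gap under the Inverse Gap Weighting distribution is bounded
by `(n-1)/γ`. -/
theorem igw_expected_gap_bound {α : Type*} [Fintype α] [DecidableEq α]
    [Nonempty α] (v : α → ℝ) (astar : α) (hmax : ∀ a, v a ≤ v astar)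
    (γ : ℝ) (hγ : 0 < γ) :
    ∑ a ∈ Finset.univ.erase astar,
        (v astar - v a) / ((Fintype.card α : ℝ) + γ * (v astar - v a))
      ≤ ((Fintype.card α : ℝ) - 1) / γ := by
  have hn : (0:ℝ) < (Fintype.card α : ℝ) := by
    exact_mod_cast Fintype.card_pos
  have hbound : ∀ a : α,
      (v astar - v a) / ((Fintype.card α : ℝ) + γ * (v astar - v a)) ≤ 1 / γ := by
    intro a
    have hg : 0 ≤ v astar - v a := by linarith [hmax a]
    rcases eq_or_lt_of_le hg with h | h
    · rw [← h]
      simp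
      positivity
    · rw [div_le_div_iff₀ (by nlinarith) hγ]
      nlinarith
  calc ∑ a ∈ Finset.univ.erase astar,
        (v astar - v a) / ((Fintype.card α : ℝ) + γ * (v astar - v a))
      ≤ ∑ _a ∈ Finset.univ.erase astar, 1 / γ :=
        Finset.sum_le_sum fun a _ => hbound a
    _ = ((Fintype.card α : ℝ) - 1) / γ := by
        rw [Finset.sum_const, Finset.card_erase_of_mem (Finset.mem_univ _),
          Finset.card_univ]
        rw [nsmul_eq_mul]
        have : (1:ℕ) ≤ Fintype.card α := Fintype.card_pos
        push_cast [this]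
        ring
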